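/- Let $L$ be an $n \times n$ matrix over a field with $L_{kk} = 0$ for a fixed index $k$, such that $I - L$ is invertible. Define the edge-eliminated matrix $L'$ on the index set with $k$ removed by $L'_{ij} = L_{ij} + L_{ik} L_{kj}$ for $i, j \neq k$ (a rank-one update that moves the weights of edges through node $k$ onto direct edges). If $I - L'$ is invertible, then for all $i, j \neq k$, the $(i,j)$ entry of $(I - L')^{-1}$ equals the $(i,j)$ entry of $(I - L)^{-1}$; that is, deleting row and column $k$ from the path weights matrix $(I-L)^{-1}$ gives the path weights matrix of the graph with node $k$ eliminated. -/
import Mathlib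


lemma sum_subtype_ne_aux {F : Type*} [AddCommGroup F] {n : ℕ} (k : Fin n) (f : Fin n → F) :
    ∑ m : {i : Fin n // i ≠ k}, f m.1 = (∑ m, f m) - f k := by
  classical
  rw [← Finset.sum_subtype (Finset.univ.erase k) (fun x => by simp) f,
    Finset.sum_erase_eq_sub (Finset.mem_univ k)]

/-- Edge elimination: if `L k k = 0`, `I - L` is invertible, and `L'` is the matrix on the
index set with `k` removed given by `L' i j = L i j + L i k * L k j`, with `I - L'`
invertible, then `(I - L')⁻¹ i j = (I - L)⁻¹ i j` for all `i, j ≠ k`. -/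
theorem stmt_3 {F : Type*} [Field F] (n : ℕ)
    (L : Matrix (Fin n) (Fin n) F) (k : Fin n) (hkk : L k k = 0)
    (hL : IsUnit (1 - L))
    (L' : Matrix {i : Fin n // i ≠ k} {i : Fin n // i ≠ k} F)
    (hL'def : ∀ i j : {i : Fin n // i ≠ k}, L' i j = L i.1 j.1 + L i.1 k * L k j.1)
    (hL' : IsUnit (1 - L')) :
    ∀ i j : {i : Fin n // i ≠ k}, (1 - L')⁻¹ i j = (1 - L)⁻¹ i.1 j.1 := by
  classical
  have hdet : IsUnit (1 - L).det := (Matrix.isUnit_iff_isUnit_det _).mp hL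
  set N := (1 - L)⁻¹ with hNdef
  have hmul : (1 - L) * N = 1 := Matrix.mul_nonsing_inv _ hdet
  have hsum : ∀ i j : Fin n, N i j - ∑ m, L i m * N m j
      = (1 : Matrix (Fin n) (Fin n) F) i j := by
    intro i j
    have h := congrFun (congrFun hmul i) j
    rw [Matrix.mul_apply] at h
    simp only [Matrix.sub_apply, Matrix.one_apply, sub_mul, ite_mul, one_mul, zero_mul,
      Finset.sum_sub_distrib, Finset.sum_ite_eq, Finset.mem_univ, if_true] at h
    simpa [Matrix.one_apply] using h
  have hk : ∀ j : Fin n, j ≠ k → ∑ m, L k m * N m j = N k j := by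
    intro j hj
    have h := hsum k j
    rw [Matrix.one_apply_ne' hj] at h
    exact (sub_eq_zero.mp h).symm
  set P : Matrix {i : Fin n // i ≠ k} {i : Fin n // i ≠ k} F := fun i j => N i.1 j.1 with hP
  have key : (1 - L') * P = 1 := by
    ext i j
    rw [Matrix.mul_apply]
    simp only [Matrix.sub_apply, Matrix.one_apply, sub_mul, ite_mul, one_mul, zero_mul,
      Finset.sum_sub_distrib, Finset.sum_ite_eq, Finset.mem_univ, if_true]
    have h1 : ∑ m : {i : Fin n // i ≠ k}, L' i m * P m j
        = (∑ m, (L i.1 m + L i.1 k * L k m) * N m j.1)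
          - (L i.1 k + L i.1 k * L k k) * N k j.1 := by
      rw [← sum_subtype_ne_aux k (fun m => (L i.1 m + L i.1 k * L k m) * N m j.1)]
      exact Finset.sum_congr rfl (fun m _ => by rw [hL'def, hP])
    rw [h1]
    have h2 : ∑ m, (L i.1 m + L i.1 k * L k m) * N m j.1
        = (∑ m, L i.1 m * N m j.1) + L i.1 k * ∑ m, L k m * N m j.1 := by
      rw [Finset.mul_sum, ← Finset.sum_add_distrib]
      exact Finset.sum_congr rfl (fun m _ => by ring)
    rw [h2, hk j.1 j.2, hkk]
    have h3 := hsum i.1 j.1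
    have h4 : (1 : Matrix (Fin n) (Fin n) F) i.1 j.1
        = (1 : Matrix {i : Fin n // i ≠ k} {i : Fin n // i ≠ k} F) i j := by
      simp [Matrix.one_apply, Subtype.ext_iff]
    rw [h4] at h3
    simp only [Matrix.one_apply] at h3 ⊢
    rw [hP]
    split_ifs at h3 ⊢ <;> linear_combination h3
  have := Matrix.inv_eq_right_inv key
  intro i j
  rw [this, hP]
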